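/- For every finite word w over {0,1,2}, the weights satisfy the strict inequality (b_0^(w) - 1/3)^2 + (b_1^(w) - 1/3)^2 + (b_2^(w) - 1/3)^2 < 1/6. -/

import Mathlib

open Matrix BigOperators

/-- The matrix `M_0`. -/
noncomputable def M0 : Matrix (Fin 3) (Fin 3) ℝ :=
  (1 / 15 : ℝ) • !![9, 0, 0; 2, 2, -1; 2, -1, 2]

/-- The matrix `M_1`. -/
noncomputable def M1 : Matrix (Fin 3) (Fin 3) ℝ :=
  (1 / 15 : ℝ) • !![2, 2, -1; 0, 9, 0; -1, 2, 2]

/-- The matrix `M_2`. -/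
noncomputable def M2 : Matrix (Fin 3) (Fin 3) ℝ :=
  (1 / 15 : ℝ) • !![2, -1, 2; -1, 2, 2; 0, 0, 9]

/-- `Mmat i` is the matrix `M_i`. -/
noncomputable def Mmat : Fin 3 → Matrix (Fin 3) (Fin 3) ℝ := ![M0, M1, M2]

/-- For a word `w = [w₁, ..., wₘ]`, `Mword w = M_{w₁} * ⋯ * M_{wₘ}`
(the empty word giving the identity matrix). -/
noncomputable def Mword (w : List (Fin 3)) : Matrix (Fin 3) (Fin 3) ℝ :=
  (w.map Mmat).prod

/-- The `j`-th column `z_j` of `M_w`, as a vector in `ℝ³`. -/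
noncomputable def zcol (w : List (Fin 3)) (j : Fin 3) : Fin 3 → ℝ :=
  fun i => Mword w i j

/-- The vector `z = z₀ + z₁ + z₂`, the sum of the columns of `M_w`. -/
noncomputable def zvec (w : List (Fin 3)) : Fin 3 → ℝ :=
  fun i => ∑ j : Fin 3, Mword w i j

/-- `c_j^(w)`, the `j`-th column sum of `M_w`, i.e. the `j`-th entry of `(1,1,1) M_w`. -/
noncomputable def cw (w : List (Fin 3)) (j : Fin 3) : ℝ :=
  ∑ i : Fin 3, Mword w i j

/-- `S^(w) = c₀^(w) + c₁^(w) + c₂^(w)`, the sum of all entries of `M_w`. -/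
noncomputable def Sw (w : List (Fin 3)) : ℝ :=
  ∑ j : Fin 3, cw w j

/-- The weight `b_j^(w) = 1/6 + c_j^(w) / (2 S^(w))`. -/
noncomputable def bwt (w : List (Fin 3)) (j : Fin 3) : ℝ :=
  1 / 6 + cw w j / (2 * Sw w)

/-- One-step preservation of the invariant `S > 0 ∧ q > 0` under right
multiplication of the row vector by any `M_a`. -/
lemma step_inv (a : Fin 3) (v : Fin 3 → ℝ)
    (hS : 0 < v 0 + v 1 + v 2)
    (hq : 0 < v 0 * v 1 + v 1 * v 2 + v 2 * v 0) :
    (0 < (v ᵥ* Mmat a) 0 + (v ᵥ* Mmat a) 1 + (v ᵥ* Mmat a) 2) ∧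
    (0 < (v ᵥ* Mmat a) 0 * (v ᵥ* Mmat a) 1 + (v ᵥ* Mmat a) 1 * (v ᵥ* Mmat a) 2
        + (v ᵥ* Mmat a) 2 * (v ᵥ* Mmat a) 0) := by
  fin_cases a <;>
    simp [Mmat, M0, M1, M2, Matrix.vecMul, dotProduct, Fin.sum_univ_three, Matrix.vecHead, Matrix.vecTail] <;>
    constructor <;>
    nlinarith [hS, hq, sq_nonneg (v 0 - v 1), sq_nonneg (v 1 - v 2), sq_nonneg (v 0 - v 2),
      sq_nonneg (v 0 + v 1 + v 2), mul_pos hS hq]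

/-- Propagation of the invariant along a word. -/
lemma word_inv (w : List (Fin 3)) : ∀ (v : Fin 3 → ℝ),
    0 < v 0 + v 1 + v 2 →
    0 < v 0 * v 1 + v 1 * v 2 + v 2 * v 0 →
    (0 < (v ᵥ* Mword w) 0 + (v ᵥ* Mword w) 1 + (v ᵥ* Mword w) 2) ∧
    (0 < (v ᵥ* Mword w) 0 * (v ᵥ* Mword w) 1 + (v ᵥ* Mword w) 1 * (v ᵥ* Mword w) 2
        + (v ᵥ* Mword w) 2 * (v ᵥ* Mword w) 0) := by
  induction w with
  | nil =>
    intro v hS hq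
    simpa [Mword] using ⟨hS, hq⟩
  | cons a t ih =>
    intro v hS hq
    have hM : Mword (a :: t) = Mmat a * Mword t := by
      simp [Mword]
    rw [hM, ← Matrix.vecMul_vecMul]
    exact ih (v ᵥ* Mmat a) (step_inv a v hS hq).1 (step_inv a v hS hq).2

/-- For every finite word `w` over `{0,1,2}`,
`(b₀^(w) - 1/3)² + (b₁^(w) - 1/3)² + (b₂^(w) - 1/3)² < 1/6`. -/
theorem stmt_15 (w : List (Fin 3)) :
    (bwt w 0 - 1 / 3) ^ 2 + (bwt w 1 - 1 / 3) ^ 2 + (bwt w 2 - 1 / 3) ^ 2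
      < 1 / 6 := by
  have hcw : ∀ j, cw w j = ((fun _ => (1 : ℝ)) ᵥ* Mword w) j := by
    intro j
    simp [cw, Matrix.vecMul, dotProduct, Fin.sum_univ_three]
  obtain ⟨hS, hq⟩ := word_inv w (fun _ => (1 : ℝ)) (by norm_num) (by norm_num)
  rw [← hcw 0, ← hcw 1, ← hcw 2] at hS hq
  set c0 := cw w 0 with hc0
  set c1 := cw w 1 with hc1
  set c2 := cw w 2 with hc2
  have hSw : Sw w = c0 + c1 + c2 := by
    simp [Sw, Fin.sum_univ_three, hc0, hc1, hc2]
  have hSpos : 0 < Sw w := by rw [hSw]; exact hS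
  have hSne : Sw w ≠ 0 := ne_of_gt hSpos
  have hb : ∀ j : Fin 3, bwt w j - 1 / 3 = (3 * cw w j - Sw w) / (6 * Sw w) := by
    intro j
    rw [bwt]
    field_simp
    ring
  rw [hb 0, hb 1, hb 2]
  rw [div_pow, div_pow, div_pow, ← add_div, ← add_div, div_lt_iff₀ (by positivity)]
  rw [hSw]
  nlinarith [hq, sq_nonneg (c0 + c1 + c2)]
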